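/- For q ∈ (0,1) and any probability vector p in ℝ^d, the quantity g(q) = ∑_j p_j^q + (∑_j p_j^{1/q})^q − 2 is nonnegative. Equivalently, on pure states C_q^I(ψ) ≤ C_q^III(ψ) for q ∈ (0,1). -/

import Mathlib

/-- For q ∈ (0,1) and a probability vector p: ∑_j p_j^q + (∑_j p_j^{1/q})^q − 2 ≥ 0,
i.e. on pure states C_q^I ≤ C_q^III. -/
theorem tsallis_coherenceI_le_coherenceIII (d : ℕ) (q : ℝ) (hq0 : 0 < q) (hq1 : q < 1)
    (p : Fin d → ℝ) (hp : ∀ j, 0 ≤ p j) (hsum : ∑ j, p j = 1) :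
    0 ≤ (∑ j, p j ^ q) + (∑ j, p j ^ (1 / q)) ^ q - 2 := by
  have h1q : (0:ℝ) < 1 + q := by linarith
  set α : ℝ := q / (1 + q) with hα
  have hα0 : 0 < α := div_pos hq0 h1q
  have hα1 : α < 1 := (div_lt_one h1q).2 (by linarith)
  -- conjugate exponents
  have hconj : Real.HolderConjugate (1 + q) ((1 + q) / q) := by
    refine Real.holderConjugate_iff.mpr ⟨?_, ?_⟩
    · linarith
    · field_simp
  have hholder := Real.inner_le_Lp_mul_Lq_of_nonneg (s := Finset.univ)
      (f := fun j => p j ^ α) (g := fun j => p j ^ (1 - α)) hconj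
      (fun j _ => Real.rpow_nonneg (hp j) _) (fun j _ => Real.rpow_nonneg (hp j) _)
  have hfg : ∀ j, p j ^ α * p j ^ (1 - α) = p j := by
    intro j
    rw [← Real.rpow_add' (hp j) (by norm_num)]
    simp
  have heα : α * (1 + q) = q := div_mul_cancel₀ q (ne_of_gt h1q)
  have heβ : (1 - α) * ((1 + q) / q) = 1 / q := by
    have h1 : 1 - α = 1 / (1 + q) := by
      rw [hα]; field_simp; ring
    rw [h1]
    field_simp
  have hfs : ∀ j, (p j ^ α) ^ (1 + q) = p j ^ q := by
    intro j
    rw [← Real.rpow_mul (hp j), heα]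
  have hgs : ∀ j, (p j ^ (1 - α)) ^ ((1 + q) / q) = p j ^ (1 / q) := by
    intro j
    rw [← Real.rpow_mul (hp j), heβ]
  simp only [hfg, hfs, hgs, hsum] at hholder
  set S1 : ℝ := ∑ j, p j ^ q with hS1
  set T : ℝ := ∑ j, p j ^ (1 / q) with hT
  have hS1n : 0 ≤ S1 := Finset.sum_nonneg fun j _ => Real.rpow_nonneg (hp j) _
  have hTn : 0 ≤ T := Finset.sum_nonneg fun j _ => Real.rpow_nonneg (hp j) _
  set S2 : ℝ := T ^ q with hS2
  have hS2n : 0 ≤ S2 := Real.rpow_nonneg hTn _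
  -- rewrite hholder as 1 ≤ (S1 * S2) ^ (1/(1+q))
  have key : 1 ≤ (S1 * S2) ^ (1 / (1 + q)) := by
    have hT2 : T ^ (1 / ((1 + q) / q)) = S2 ^ (1 / (1 + q)) := by
      rw [hS2, ← Real.rpow_mul hTn]
      congr 1
      field_simp
    calc (1:ℝ) ≤ S1 ^ (1 / (1 + q)) * T ^ (1 / ((1 + q) / q)) := hholder
      _ = S1 ^ (1 / (1 + q)) * S2 ^ (1 / (1 + q)) := by rw [hT2]
      _ = (S1 * S2) ^ (1 / (1 + q)) := (Real.mul_rpow hS1n hS2n).symm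
  have hprod : 1 ≤ S1 * S2 := by
    have := Real.rpow_le_rpow (by norm_num) key (le_of_lt h1q)
    rwa [Real.one_rpow, ← Real.rpow_mul (mul_nonneg hS1n hS2n),
      one_div, inv_mul_cancel₀ (ne_of_gt h1q), Real.rpow_one] at this
  nlinarith [sq_nonneg (S1 - S2), sq_nonneg (S1 + S2 - 2)]
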